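/- Let S = {x : Fx ≤ g} be a polytope, ℱ a face of S with vertex set vert(ℱ), and H : ℝⁿ → ℝ twice continuously differentiable. Let T_ℱ ∈ ℝ^{n×d} have columns spanning the tangent subspace of ℱ, and suppose T_ℱᵀ (∂²H(x)/∂x²) T_ℱ ⪰ -ε I_d for all x ∈ ℱ, with ε ≥ 0. If H(v) + (ε/2)‖v‖₂² ≤ t for every vertex v ∈ vert(ℱ), then H(z) ≤ t for every z ∈ ℱ. -/

import Mathlib

open scoped RealInnerProductSpace


/-- Face-restricted vertex verification. Let ℱ be a face of the polytope
S (intersection of S with a supporting hyperplane) with vertex set Vf, tangent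
directions tcol spanning its tangent subspace, H be C², and suppose the tangential
Hessian satisfies Tᵀ(∂²H)T ⪰ -εI on ℱ with ε ≥ 0. If H(v) + (ε/2)‖v‖² ≤ t at every
vertex v of ℱ, then H(z) ≤ t for every z ∈ ℱ. -/
theorem stmt19 {n s d : ℕ}
    (F : Fin s → EuclideanSpace ℝ (Fin n)) (g : Fin s → ℝ)
    (S : Set (EuclideanSpace ℝ (Fin n)))
    (hS : S = {x | ∀ i, inner ℝ (F i) x ≤ g i})
    (hSbdd : Bornology.IsBounded S)
    (ℱ : Set (EuclideanSpace ℝ (Fin n)))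
    (hface : ∃ (a : EuclideanSpace ℝ (Fin n)) (b : ℝ),
      (∀ x ∈ S, inner ℝ a x ≤ b) ∧ ℱ = {x ∈ S | inner ℝ a x = (b : ℝ)})
    (Vf : Finset (EuclideanSpace ℝ (Fin n))) (hVf : (Vf : Set _) ⊆ ℱ)
    (hhull : ℱ = convexHull ℝ (Vf : Set (EuclideanSpace ℝ (Fin n))))
    (tcol : Fin d → EuclideanSpace ℝ (Fin n))
    (hspan : ∀ x ∈ ℱ, ∀ y ∈ ℱ, x - y ∈ Submodule.span ℝ (Set.range tcol))
    (H : EuclideanSpace ℝ (Fin n) → ℝ) (hC2 : ContDiff ℝ 2 H)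
    (ε : ℝ) (hε : 0 ≤ ε)
    (hHess : ∀ x ∈ ℱ, ∀ c : Fin d → ℝ,
      -(ε * ‖∑ i, c i • tcol i‖ ^ 2) ≤
        iteratedFDeriv ℝ 2 H x ![∑ i, c i • tcol i, ∑ i, c i • tcol i])
    (t : ℝ) (hvert : ∀ v ∈ Vf, H v + ε / 2 * ‖v‖ ^ 2 ≤ t) :
    ∀ z ∈ ℱ, H z ≤ t := by
  have hFconv : Convex ℝ ℱ := hhull ▸ convex_convexHull ℝ _
  have hHdiff : Differentiable ℝ H := hC2.differentiable (by norm_num)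
  have hH1 : Differentiable ℝ (fderiv ℝ H) :=
    (hC2.fderiv_right (m := 1) (by norm_num)).differentiable one_ne_zero
  set G : EuclideanSpace ℝ (Fin n) → ℝ := fun x => H x + ε / 2 * ⟪x, x⟫ with hGdef
  have hGconv : ConvexOn ℝ ℱ G := by
    refine ⟨hFconv, ?_⟩
    intro x hx y hy a b ha hb hab
    set v : EuclideanSpace ℝ (Fin n) := y - x with hv
    obtain ⟨c, hc⟩ := (Submodule.mem_span_range_iff_exists_fun ℝ).mp (hspan y hy x hx)
    set L : ℝ → EuclideanSpace ℝ (Fin n) := fun s => x + s • v with hLdef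
    have hL : ∀ s : ℝ, HasDerivAt L v s := fun s => by
      simpa [hLdef] using ((hasDerivAt_id s).smul_const v).const_add x
    set f : ℝ → ℝ := fun s => G (L s) with hfdef
    set f' : ℝ → ℝ := fun s => fderiv ℝ H (L s) v + ε / 2 * (⟪L s, v⟫ + ⟪v, L s⟫) with hf'def
    set f'' : ℝ → ℝ := fun s =>
      fderiv ℝ (fderiv ℝ H) (L s) v v + ε / 2 * (⟪v, v⟫ + ⟪v, v⟫) with hf''def
    have hf' : ∀ s : ℝ, HasDerivAt f (f' s) s := by
      intro s
      exact ((hHdiff (L s)).hasFDerivAt.comp_hasDerivAt s (hL s)).add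
        (((hL s).inner ℝ (hL s)).const_mul (ε / 2))
    have hf'' : ∀ s : ℝ, HasDerivAt f' (f'' s) s := by
      intro s
      refine HasDerivAt.add ?_ ?_
      · have h1 : HasDerivAt (fun u : ℝ => fderiv ℝ H (L u))
            (fderiv ℝ (fderiv ℝ H) (L s) v) s :=
          (hH1 (L s)).hasFDerivAt.comp_hasDerivAt s (hL s)
        exact ((ContinuousLinearMap.apply ℝ ℝ v).hasFDerivAt.comp_hasDerivAt s h1)
      · have h2 : HasDerivAt (fun u : ℝ => ⟪L u, v⟫ + ⟪v, L u⟫) (⟪v, v⟫ + ⟪v, v⟫) s := by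
          have ha := (hL s).inner ℝ (hasDerivAt_const s v)
          have hb := (hasDerivAt_const s v).inner ℝ (hL s)
          simpa using ha.fun_add hb
        simpa [mul_add] using h2.const_mul (ε / 2)
    have hmem : ∀ u ∈ Set.Icc (0:ℝ) 1, L u ∈ ℱ := by
      intro u hu
      have : L u = (1 - u) • x + u • y := by
        simp only [hLdef, hv]
        module
      rw [this]
      exact hFconv hx hy (by linarith [hu.2]) hu.1 (by ring)
    have hconv : ConvexOn ℝ (Set.Icc (0:ℝ) 1) f := by
      refine convexOn_of_hasDerivWithinAt2_nonneg (convex_Icc 0 1)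
        (fun u _ => ((hf' u).continuousAt).continuousWithinAt)
        (fun u _ => (hf' u).hasDerivWithinAt) (fun u _ => (hf'' u).hasDerivWithinAt) ?_
      intro u hu
      rw [interior_Icc] at hu
      have hLu : L u ∈ ℱ := hmem u ⟨le_of_lt hu.1, le_of_lt hu.2⟩
      have hH2 := hHess (L u) hLu c
      rw [hc] at hH2
      rw [iteratedFDeriv_two_apply] at hH2
      simp only [Matrix.cons_val_zero, Matrix.cons_val_one, Matrix.head_cons] at hH2
      have hvv : ⟪v, v⟫ = ‖v‖ ^ 2 := real_inner_self_eq_norm_sq v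
      simp only [hf''def, hvv]
      nlinarith [sq_nonneg ‖v‖]
    have h01 : f (a • 0 + b • 1) ≤ a * f 0 + b * f 1 :=
      hconv.2 (Set.left_mem_Icc.mpr zero_le_one) (Set.right_mem_Icc.mpr zero_le_one) ha hb hab
    have hL0 : L 0 = x := by simp [hLdef]
    have hL1 : L 1 = y := by simp [hLdef, hv]
    have hLb : L (a • (0:ℝ) + b • 1) = a • x + b • y := by
      simp only [hLdef, hv, smul_eq_mul, mul_zero, mul_one, zero_add]
      have : b = 1 - a := by linarith
      rw [this]; module
    calc G (a • x + b • y) = f (a • 0 + b • 1) := by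
          show G (a • x + b • y) = G (L (a • 0 + b • 1)); rw [hLb]
      _ ≤ a * f 0 + b * f 1 := h01
      _ = a * G x + b * G y := by
          show a * G (L 0) + b * G (L 1) = _; rw [hL0, hL1]
  intro z hz
  obtain ⟨w, hw, hzw⟩ := hGconv.exists_ge_of_mem_convexHull hVf (hhull ▸ hz)
  have hwt : G w ≤ t := by
    have := hvert w hw
    have : ⟪w, w⟫ = ‖w‖ ^ 2 := real_inner_self_eq_norm_sq w
    simp only [hGdef, this]
    linarith [hvert w hw]
  have hzG : H z ≤ G z := by
    have : (0:ℝ) ≤ ε / 2 * ⟪z, z⟫ := by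
      have := real_inner_self_nonneg (x := z)
      positivity
    simp only [hGdef]; linarith
  linarith
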